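/- Let q < −1 and let n ≥ 1 satisfy n ≤ 1 + ((q+1)/(q−1))^{q−1} (equivalently, with p = |q| > 1, n ≤ 1 + ((p+1)/(p−1))^{p+1}). Then the Lehmer mean L_q of n arguments is weakly monotone on (0,∞)ⁿ: for every x ∈ (0,∞)ⁿ and every a > 0, L_q(x + a·𝟙) ≥ L_q(x), where 𝟙 = (1,1,…,1). -/

import Mathlib

open Finset

/-- Cauchy–Schwarz consequence: for `q < -1` and positive `y`, the numerator of the
derivative of the Lehmer mean along the diagonal is nonnegative. -/
lemma lehmer_aux_cs (q : ℝ) (hq : q < -1) (n : ℕ) (y : Fin n → ℝ)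
    (hy : ∀ i, 0 < y i) :
    0 ≤ ((q+1) * ∑ i, (y i) ^ q) * (∑ i, (y i) ^ q)
        - (∑ i, (y i) ^ (q+1)) * (q * ∑ i, (y i) ^ (q-1)) := by
  set A := ∑ i, (y i) ^ (q+1) with hA
  set B := ∑ i, (y i) ^ q with hB
  set C := ∑ i, (y i) ^ (q-1) with hC
  have hB2 : B ^ 2 ≤ A * C := by
    have h := Finset.sum_mul_sq_le_sq_mul_sq univ
      (fun i => y i ^ ((q+1)/2)) (fun i => y i ^ ((q-1)/2))
    have e1 : ∑ i, y i ^ ((q+1)/2) * y i ^ ((q-1)/2) = B := by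
      rw [hB]; apply Finset.sum_congr rfl; intro i _
      rw [← Real.rpow_add (hy i)]; ring_nf
    have e2 : ∑ i, (y i ^ ((q+1)/2)) ^ 2 = A := by
      rw [hA]; apply Finset.sum_congr rfl; intro i _
      rw [pow_two, ← Real.rpow_add (hy i)]; ring_nf
    have e3 : ∑ i, (y i ^ ((q-1)/2)) ^ 2 = C := by
      rw [hC]; apply Finset.sum_congr rfl; intro i _
      rw [pow_two, ← Real.rpow_add (hy i)]; ring_nf
    rwa [e1, e2, e3] at h
  nlinarith [mul_nonneg (by linarith : (0:ℝ) ≤ -q) (by linarith : (0:ℝ) ≤ A*C - B^2),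
    sq_nonneg B]

/-- For `q < −1` and `n ≥ 1` with `n ≤ 1 + ((q+1)/(q−1))^(q−1)`, the Lehmer
mean `L_q(x) = (Σᵢ xᵢ^(q+1))/(Σᵢ xᵢ^q)` of `n` arguments is weakly monotone on `(0,∞)ⁿ`:
`L_q(x + a·𝟙) ≥ L_q(x)` for every `x ∈ (0,∞)ⁿ` and `a > 0`. -/
theorem lehmer_weakly_monotone_neg (q : ℝ) (hq : q < -1) (n : ℕ) (hn : 1 ≤ n)
    (hnq : (n : ℝ) ≤ 1 + ((q + 1) / (q - 1)) ^ (q - 1)) :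
    ∀ (x : Fin n → ℝ) (a : ℝ), (∀ i, 0 < x i) → 0 < a →
      (∑ i, x i ^ (q + 1)) / (∑ i, x i ^ q) ≤
        (∑ i, (x i + a) ^ (q + 1)) / (∑ i, (x i + a) ^ q) := by
  intro x a hx ha
  have hne : (univ : Finset (Fin n)).Nonempty := ⟨⟨0, hn⟩, mem_univ _⟩
  set F : ℝ → ℝ := fun t => (∑ i, (x i + t) ^ (q + 1)) / (∑ i, (x i + t) ^ q) with hF
  -- derivative of F at every point of [0, a]
  have hder : ∀ t ∈ Set.Icc (0:ℝ) a,
      HasDerivAt F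
        ((((q+1) * ∑ i, (x i + t) ^ q) * (∑ i, (x i + t) ^ q)
          - (∑ i, (x i + t) ^ (q+1)) * (q * ∑ i, (x i + t) ^ (q-1)))
          / (∑ i, (x i + t) ^ q) ^ 2) t := by
    intro t ht
    have hpos : ∀ i, 0 < x i + t := fun i => by have := hx i; have := ht.1; linarith
    have hN : HasDerivAt (fun t => ∑ i, (x i + t) ^ (q + 1))
        ((q+1) * ∑ i, (x i + t) ^ q) t := by
      have : HasDerivAt (fun t => ∑ i, (x i + t) ^ (q + 1))
          (∑ i, 1 * (q+1) * (x i + t) ^ (q+1-1)) t := by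
        apply HasDerivAt.fun_sum
        intro i _
        exact ((hasDerivAt_id t).const_add (x i)).rpow_const (Or.inl (hpos i).ne')
      convert this using 1
      rw [Finset.mul_sum]
      apply Finset.sum_congr rfl; intro i _; ring_nf
    have hD : HasDerivAt (fun t => ∑ i, (x i + t) ^ q)
        (q * ∑ i, (x i + t) ^ (q-1)) t := by
      have : HasDerivAt (fun t => ∑ i, (x i + t) ^ q)
          (∑ i, 1 * q * (x i + t) ^ (q-1)) t := by
        apply HasDerivAt.fun_sum
        intro i _
        exact ((hasDerivAt_id t).const_add (x i)).rpow_const (Or.inl (hpos i).ne')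
      convert this using 1
      rw [Finset.mul_sum]
      apply Finset.sum_congr rfl; intro i _; ring_nf
    have hDpos : 0 < ∑ i, (x i + t) ^ q :=
      Finset.sum_pos (fun i _ => Real.rpow_pos_of_pos (hpos i) q) hne
    exact hN.div hD hDpos.ne'
  -- F is monotone on [0, a]
  have hmono : MonotoneOn F (Set.Icc 0 a) := by
    apply monotoneOn_of_deriv_nonneg (convex_Icc 0 a)
    · intro t ht
      exact (hder t ht).continuousAt.continuousWithinAt
    · intro t ht
      rw [interior_Icc] at ht
      exact (hder t (Set.mem_Icc_of_Ioo ht)).differentiableAt.differentiableWithinAt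
    · intro t ht
      rw [interior_Icc] at ht
      have ht' := Set.mem_Icc_of_Ioo ht
      rw [(hder t ht').deriv]
      have hpos : ∀ i, 0 < x i + t := fun i => by have := hx i; have := ht'.1; linarith
      apply div_nonneg _ (sq_nonneg _)
      exact lehmer_aux_cs q hq n (fun i => x i + t) hpos
  have h0 : (0:ℝ) ∈ Set.Icc (0:ℝ) a := ⟨le_refl 0, ha.le⟩
  have hA : a ∈ Set.Icc (0:ℝ) a := ⟨ha.le, le_refl a⟩
  have := hmono h0 hA ha.le
  simpa [hF] using this
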